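/- arXiv:1708.04903 — 4 statements merged into one kernel-verified Lean document; each statement's English description precedes it below -/
import Mathlib

section
/- For any positive integer k and any real numbers x, y > 0, y(x+y)^k ≤ (k/(k+1)) x^{k+1} + b_k y^{k+1}, where b_k = (1+z_0)^{k-1} (1 + z_0/(k+1)) and z_0 > 0 is the unique positive root of the equation z^k = (1+z)^{k-1} (i.e., taking a(k) = 1 in the smoothness inequality). -/
private lemma ratio_lt (m : ℕ) (a b : ℝ) (ha : 0 < a) (hab : a < b) :
    a ^ (m+1) * (1 + b) ^ m < (1 + a) ^ m * b ^ (m+1) := by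
  have hb : 0 < b := ha.trans hab
  have h1 : a * (1 + b) < b * (1 + a) := by nlinarith
  have hP : 0 ≤ a * (1 + b) := by positivity
  have h2 : (a * (1 + b)) ^ m ≤ (b * (1 + a)) ^ m := pow_le_pow_left₀ hP h1.le m
  have hQ : 0 < (b * (1 + a)) ^ m := by positivity
  calc a ^ (m+1) * (1 + b) ^ m = (a * (1 + b)) ^ m * a := by rw [mul_pow]; ring
    _ ≤ (b * (1 + a)) ^ m * a := by nlinarith
    _ < (b * (1 + a)) ^ m * b := by nlinarith
    _ = (1 + a) ^ m * b ^ (m+1) := by rw [mul_pow]; ring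

private lemma f_nonneg (m : ℕ) (z₀ : ℝ) (hz₀ : 0 < z₀)
    (hroot : z₀ ^ (m+1) = (1 + z₀) ^ m) (z : ℝ) (hz : 0 < z) :
    (1 + z) ^ (m+1) ≤ ((m+1 : ℝ)/(m+2)) * z ^ (m+2) + (1 + z₀) ^ m * (1 + z₀/(m+2)) := by
  set C : ℝ := (1 + z₀) ^ m * (1 + z₀/(m+2)) with hC
  set f : ℝ → ℝ := fun t => ((m+1 : ℝ)/(m+2)) * t ^ (m+2) + C - (1 + t) ^ (m+1) with hf
  have hm2 : (m + 2 : ℝ) ≠ 0 := by positivity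
  have hder : ∀ t : ℝ, HasDerivAt f ((m+1 : ℝ) * t ^ (m+1) - (m+1) * (1 + t) ^ m) t := by
    intro t
    have h1 : HasDerivAt (fun t : ℝ => t ^ (m+2)) ((m+2 : ℝ) * t ^ (m+1)) t := by
      simpa using hasDerivAt_pow (m+2) t
    have h2 : HasDerivAt (fun t : ℝ => (1 + t) ^ (m+1)) ((m+1 : ℝ) * (1 + t) ^ m) t := by
      have := ((hasDerivAt_id t).const_add (1 : ℝ)).pow (m+1)
      simp at this
      exact this
    have h3 := ((h1.const_mul ((m+1 : ℝ)/(m+2))).add_const C).sub h2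
    refine HasDerivAt.congr_deriv h3 ?_
    field_simp
  have hcont : Continuous f := by
    exact Differentiable.continuous (fun t => (hder t).differentiableAt)
  -- derivative sign
  have hneg : ∀ t ∈ Set.Ioo (0:ℝ) z₀, deriv f t < 0 := by
    intro t ht
    rw [(hder t).deriv]
    have h := ratio_lt m t z₀ ht.1 ht.2
    rw [hroot] at h
    have hpow : (0:ℝ) < (1 + z₀) ^ m := by positivity
    have : t ^ (m+1) < (1 + t) ^ m := by
      have := (mul_lt_mul_iff_left₀ hpow).mp h
      · exact this
    nlinarith [this]
  have hpos' : ∀ t ∈ interior (Set.Ici z₀), 0 < deriv f t := by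
    rw [interior_Ici]
    intro t ht
    rw [(hder t).deriv]
    have h := ratio_lt m z₀ t hz₀ ht
    rw [hroot] at h
    have hpow : (0:ℝ) < (1 + z₀) ^ m := by positivity
    have : (1 + t) ^ m < t ^ (m+1) := by
      have := (mul_lt_mul_iff_right₀ hpow).mp h
      exact this
    nlinarith [this]
  have hanti : StrictAntiOn f (Set.Icc 0 z₀) := by
    apply strictAntiOn_of_deriv_neg (convex_Icc _ _) hcont.continuousOn
    rw [interior_Icc]
    exact hneg
  have hmono : StrictMonoOn f (Set.Ici z₀) :=
    strictMonoOn_of_deriv_pos (convex_Ici _) hcont.continuousOn hpos'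
  have hfz₀ : f z₀ = 0 := by
    have e1 : z₀ ^ (m+2) = (1 + z₀) ^ m * z₀ := by
      rw [pow_succ, hroot]
    have e2 : (1 + z₀) ^ (m+1) = (1 + z₀) ^ m * (1 + z₀) := pow_succ _ _
    simp only [hf, hC, e1, e2]
    field_simp
    ring
  have key : 0 ≤ f z := by
    rcases lt_trichotomy z z₀ with h | h | h
    · have := hanti ⟨hz.le, h.le⟩ ⟨hz₀.le, le_refl _⟩ h
      rw [hfz₀] at this; linarith
    · rw [h, hfz₀]
    · have := hmono (Set.self_mem_Ici) (Set.mem_Ici.mpr h.le) h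
      rw [hfz₀] at this; linarith
  simp only [hf] at key
  linarith

/-- Lemma 5 specialized to `a(k) = 1`: the equation `z^k = (1+z)^{k-1}` has a unique
positive root `z₀`, and with `b_k = (1+z₀)^{k-1} (1 + z₀/(k+1))`, for all `x, y > 0`,
`y (x+y)^k ≤ (k/(k+1)) x^{k+1} + b_k y^{k+1}`. -/
theorem stmt1 (k : ℕ) (hk : 1 ≤ k) :
    (∃! z₀ : ℝ, 0 < z₀ ∧ z₀ ^ k = (1 + z₀) ^ (k - 1)) ∧
    ∀ z₀ : ℝ, 0 < z₀ → z₀ ^ k = (1 + z₀) ^ (k - 1) →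
      ∀ x y : ℝ, 0 < x → 0 < y →
        y * (x + y) ^ k ≤ (k / (k + 1) : ℝ) * x ^ (k + 1) +
          ((1 + z₀) ^ (k - 1) * (1 + z₀ / (k + 1))) * y ^ (k + 1) := by
  obtain ⟨m, rfl⟩ : ∃ m, k = m + 1 := ⟨k - 1, (Nat.succ_pred_eq_of_pos hk).symm⟩
  have hsub : m + 1 - 1 = m := rfl
  constructor
  · -- existence and uniqueness
    set g : ℝ → ℝ := fun z => z ^ (m+1) - (1 + z) ^ m with hg
    have hgc : Continuous g := by continuity
    have hB : (1/2 : ℝ) ≤ 2 ^ (m+1) := by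
      calc (1/2 : ℝ) ≤ 1 := by norm_num
        _ ≤ 2 ^ (m+1) := one_le_pow₀ (by norm_num)
    have hga : g (1/2) ≤ 0 := by
      simp only [hg]
      have h1 : (1/2 : ℝ) ^ (m+1) ≤ 1 := pow_le_one₀ (by norm_num) (by norm_num)
      have h2 : (1:ℝ) ≤ (1 + 1/2) ^ m := one_le_pow₀ (by norm_num)
      linarith
    have hgb : 0 ≤ g (2 ^ (m+1)) := by
      simp only [hg]
      set B : ℝ := 2 ^ (m+1) with hBdef
      have hB1 : (1:ℝ) ≤ B := one_le_pow₀ (by norm_num)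
      have h1 : (1 + B) ^ m ≤ (2 * B) ^ m := pow_le_pow_left₀ (by linarith) (by linarith) m
      have h2 : (2 * B) ^ m = 2 ^ m * B ^ m := mul_pow _ _ _
      have h3 : (2:ℝ) ^ m ≤ B := by
        rw [hBdef]
        exact pow_le_pow_right₀ (by norm_num) (by omega)
      have h4 : 2 ^ m * B ^ m ≤ B * B ^ m := by
        have : (0:ℝ) ≤ B ^ m := by positivity
        nlinarith
      have h5 : B * B ^ m = B ^ (m+1) := by ring
      linarith
    have := intermediate_value_Icc hB hgc.continuousOn
    obtain ⟨z₀, hz₀mem, hz₀eq⟩ := this ⟨hga, hgb⟩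
    have hz₀pos : 0 < z₀ := lt_of_lt_of_le (by norm_num) hz₀mem.1
    have hz₀root : z₀ ^ (m+1) = (1 + z₀) ^ m := by
      have : z₀ ^ (m+1) - (1 + z₀) ^ m = 0 := hz₀eq
      linarith
    refine ⟨z₀, ⟨hz₀pos, by simpa [hsub] using hz₀root⟩, ?_⟩
    rintro y ⟨hy, hyroot⟩
    rw [hsub] at hyroot
    by_contra hne
    rcases lt_or_gt_of_ne hne with h | h
    · have := ratio_lt m y z₀ hy h
      rw [hyroot, hz₀root] at this
      linarith
    · have := ratio_lt m z₀ y hz₀pos h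
      rw [hyroot, hz₀root] at this
      linarith
  · intro z₀ hz₀ hroot x y hx hy
    rw [hsub] at hroot ⊢
    set z : ℝ := x / y with hzdef
    have hz : 0 < z := div_pos hx hy
    have hxz : x = z * y := by exact (div_mul_cancel₀ x hy.ne').symm
    have key := f_nonneg m z₀ hz₀ hroot z hz
    have hmul := mul_le_mul_of_nonneg_right key (le_of_lt (pow_pos hy (m+2)))
    have hxy : x + y = (1 + z) * y := by rw [hxz]; ring
    rw [hxy, hxz, mul_pow, mul_pow]
    push_cast
    calc y * ((1 + z) ^ (m+1) * y ^ (m+1)) = (1 + z) ^ (m+1) * y ^ (m+2) := by ring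
      _ ≤ (((m+1 : ℝ)/(m+2)) * z ^ (m+2) + (1 + z₀) ^ m * (1 + z₀/(m+2))) * y ^ (m+2) := hmul
      _ = ((m:ℝ)+1) / ((m:ℝ)+1+1) * (z ^ (m+1+1) * y ^ (m+1+1)) +
          (1 + z₀) ^ m * (1 + z₀ / ((m:ℝ)+1+1)) * y ^ (m+1+1) := by
        have h : ((m:ℝ)+2) = (m:ℝ)+1+1 := by ring
        rw [h]
        ring
end

section
/- Let f : 2^N → ℝ≥0 be monotone and (λ,μ)-smooth with λ > 0, μ < 1, for each resource. Consider any online greedy solution and optimal solution with resource-usage sets A*_e and O_e respectively. If for every request the greedy marginal cost is at most the marginal cost of the optimal strategy, then ∑_e f_e(A*_e) ≤ (λ/(1-μ)) ∑_e f_e(O_e). -/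
open Finset

/-- `(λ,μ)`-smoothness of a set function. -/
def IsSmooth {N : Type*} [DecidableEq N] (f : Finset N → ℝ) (lam mu : ℝ) : Prop :=
  ∀ (n : ℕ) (a : Fin n → N), Function.Injective a →
    ∀ (B : Fin n → Finset N) (Bbig : Finset N),
      (∀ i j : Fin n, i ≤ j → B i ⊆ B j) → (∀ i, B i ⊆ Bbig) →
      ∑ i, (f (insert (a i) (B i)) - f (B i)) ≤
        lam * f (Finset.image a Finset.univ) + mu * f Bbig

lemma telescope {n : ℕ} (f : Finset (Fin n) → ℝ) (S : Finset (Fin n)) :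
    ∑ i ∈ S, (f (insert i (S.filter (fun j => j < i))) - f (S.filter (fun j => j < i)))
      = f S - f ∅ := by
  induction S using Finset.strongInduction with
  | _ S ih =>
    rcases S.eq_empty_or_nonempty with rfl | hS
    · simp
    · set i := S.max' hS with hidef
      have hi : i ∈ S := S.max'_mem hS
      have h1 : S.filter (fun j => j < i) = S.erase i := by
        ext j
        simp only [Finset.mem_filter, Finset.mem_erase]
        constructor
        · rintro ⟨hj, hlt⟩; exact ⟨ne_of_lt hlt, hj⟩
        · rintro ⟨hne, hj⟩; exact ⟨hj, lt_of_le_of_ne (S.le_max' j hj) hne⟩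
      have h2 : insert i (S.erase i) = S := Finset.insert_erase hi
      rw [← Finset.add_sum_erase _ _ hi]
      have h3 : ∀ j ∈ S.erase i,
          S.filter (fun k => k < j) = (S.erase i).filter (fun k => k < j) := by
        intro j hj
        have hjS := Finset.mem_of_mem_erase hj
        ext k
        simp only [Finset.mem_filter, Finset.mem_erase]
        constructor
        · rintro ⟨hk, hlt⟩
          exact ⟨⟨ne_of_lt (lt_of_lt_of_le hlt (S.le_max' j hjS)), hk⟩, hlt⟩
        · rintro ⟨⟨_, hk⟩, hlt⟩; exact ⟨hk, hlt⟩
      have h4 : ∑ j ∈ S.erase i,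
          (f (insert j (S.filter (fun k => k < j))) - f (S.filter (fun k => k < j)))
          = ∑ j ∈ S.erase i,
          (f (insert j ((S.erase i).filter (fun k => k < j)))
            - f ((S.erase i).filter (fun k => k < j))) := by
        apply Finset.sum_congr rfl
        intro j hj
        rw [h3 j hj]
      rw [h4, ih (S.erase i) (Finset.erase_ssubset hi), h1, h2]
      ring

lemma swap_sum {E : Type*} [Fintype E] {n : ℕ} (S : E → Finset (Fin n)) (g : E → Fin n → ℝ) :
    ∑ i : Fin n, ∑ e ∈ Finset.univ.filter (fun e => i ∈ S e), g e i
      = ∑ e, ∑ i ∈ S e, g e i := by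
  simp_rw [Finset.sum_filter]
  rw [Finset.sum_comm]
  refine Finset.sum_congr rfl fun e _ => ?_
  rw [Finset.sum_ite_mem, Finset.univ_inter]

/-- Theorem 1 (dual fitting form).  Requests `Fin n` arrive in order; `Astar e` (resp. `O e`)
is the set of requests using resource `e` in the greedy (resp. optimal) solution, and
`Astar e |_{< i}` the greedy set just before request `i` arrives.  If each `f e` is monotone,
`(λ,μ)`-smooth with `f e ∅ = 0`, and for every request the greedy marginal cost is at most
the marginal cost of the optimal strategy (evaluated at the current greedy state), then the
greedy cost is at most `λ/(1-μ)` times the optimal cost. -/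
theorem stmt5 {E : Type*} [Fintype E] (n : ℕ)
    (f : E → Finset (Fin n) → ℝ) (lam mu : ℝ) (hlam : 0 < lam) (hmu : mu < 1)
    (hsmooth : ∀ e, IsSmooth (f e) lam mu)
    (hmono : ∀ e (S T : Finset (Fin n)), S ⊆ T → f e S ≤ f e T)
    (hzero : ∀ e, f e ∅ = 0)
    (Astar O : E → Finset (Fin n))
    (hgreedy : ∀ i : Fin n,
      ∑ e ∈ Finset.univ.filter (fun e => i ∈ Astar e),
        (f e (insert i ((Astar e).filter (fun j => j < i))) -
         f e ((Astar e).filter (fun j => j < i))) ≤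
      ∑ e ∈ Finset.univ.filter (fun e => i ∈ O e),
        (f e (insert i ((Astar e).filter (fun j => j < i))) -
         f e ((Astar e).filter (fun j => j < i)))) :
    ∑ e, f e (Astar e) ≤ (lam / (1 - mu)) * ∑ e, f e (O e) := by
  have hmu' : (0:ℝ) < 1 - mu := by linarith
  have key : ∀ e, ∑ j ∈ O e,
      (f e (insert j ((Astar e).filter (fun k => k < j))) -
       f e ((Astar e).filter (fun k => k < j)))
      ≤ lam * f e (O e) + mu * f e (Astar e) := by
    intro e
    set m := (O e).card with hm
    let φ : Fin m ≃o (O e : Finset (Fin n)) := (O e).orderIsoOfFin rfl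
    let a : Fin m → Fin n := fun i => (φ i : Fin n)
    have hainj : Function.Injective a := fun i j h => φ.injective (Subtype.ext h)
    have hamono : Monotone a := fun i j hij => Subtype.coe_le_coe.mpr (φ.monotone hij)
    have himg : Finset.image a Finset.univ = O e := by
      ext j
      simp only [Finset.mem_image, Finset.mem_univ, true_and]
      constructor
      · rintro ⟨i, rfl⟩; exact (φ i).2
      · intro hj; exact ⟨φ.symm ⟨j, hj⟩, congrArg Subtype.val (φ.apply_symm_apply ⟨j, hj⟩)⟩
    have hchain : ∀ i j : Fin m, i ≤ j →
        (Astar e).filter (fun k => k < a i) ⊆ (Astar e).filter (fun k => k < a j) := by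
      intro i j hij
      intro k hk
      simp only [Finset.mem_filter] at hk ⊢
      exact ⟨hk.1, lt_of_lt_of_le hk.2 (hamono hij)⟩
    have hsub : ∀ i : Fin m, (Astar e).filter (fun k => k < a i) ⊆ Astar e :=
      fun i => Finset.filter_subset _ _
    have hsm := hsmooth e m a hainj (fun i => (Astar e).filter (fun k => k < a i))
      (Astar e) hchain hsub
    rw [himg] at hsm
    calc ∑ j ∈ O e,
        (f e (insert j ((Astar e).filter (fun k => k < j))) -
         f e ((Astar e).filter (fun k => k < j)))
        = ∑ i : Fin m,
          (f e (insert (a i) ((Astar e).filter (fun k => k < a i))) -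
           f e ((Astar e).filter (fun k => k < a i))) := by
          rw [← himg, Finset.sum_image (fun x _ y _ h => hainj h)]
      _ ≤ lam * f e (O e) + mu * f e (Astar e) := hsm
  have hGsum : ∑ e, f e (Astar e)
      = ∑ i : Fin n, ∑ e ∈ Finset.univ.filter (fun e => i ∈ Astar e),
        (f e (insert i ((Astar e).filter (fun j => j < i))) -
         f e ((Astar e).filter (fun j => j < i))) := by
    rw [swap_sum]
    refine Finset.sum_congr rfl fun e _ => ?_
    rw [telescope (f e) (Astar e), hzero e, sub_zero]
  have step : ∑ e, f e (Astar e)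
      ≤ lam * ∑ e, f e (O e) + mu * ∑ e, f e (Astar e) := by
    calc ∑ e, f e (Astar e)
        = ∑ i : Fin n, ∑ e ∈ Finset.univ.filter (fun e => i ∈ Astar e),
            (f e (insert i ((Astar e).filter (fun j => j < i))) -
             f e ((Astar e).filter (fun j => j < i))) := hGsum
      _ ≤ ∑ i : Fin n, ∑ e ∈ Finset.univ.filter (fun e => i ∈ O e),
            (f e (insert i ((Astar e).filter (fun j => j < i))) -
             f e ((Astar e).filter (fun j => j < i))) :=
          Finset.sum_le_sum fun i _ => hgreedy i
      _ = ∑ e, ∑ j ∈ O e,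
            (f e (insert j ((Astar e).filter (fun k => k < j))) -
             f e ((Astar e).filter (fun k => k < j))) := swap_sum _ _
      _ ≤ ∑ e, (lam * f e (O e) + mu * f e (Astar e)) :=
          Finset.sum_le_sum fun e _ => key e
      _ = lam * ∑ e, f e (O e) + mu * ∑ e, f e (Astar e) := by
          rw [Finset.sum_add_distrib, Finset.mul_sum, Finset.mul_sum]
  rw [div_mul_eq_mul_div, le_div_iff₀ hmu']
  linarith
end

section
/- Let f : 2^E → ℝ≥0 be a monotone submodular function with f(∅) = 0 on a finite set E, and let κ = 1 - min_{e ∈ E} (f(E) - f(E \ {e}))/f({e}) be its total curvature (assuming f({e}) > 0 for all e). Then for every S ⊆ E: f(S) ≥ (1 - κ) ∑_{e ∈ S} f({e}). -/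
open Finset

/-- Curvature lemma: for a monotone submodular `f` with `f ∅ = 0`, `f {e} > 0` for all `e`,
and total curvature `κ = 1 - min_e (f(E) - f(E\{e}))/f({e})`, every `S` satisfies
`f(S) ≥ (1-κ) ∑_{e∈S} f({e})`. -/
theorem stmt12 {E : Type*} [DecidableEq E] [Fintype E] [Nonempty E]
    (f : Finset E → ℝ)
    (hmono : ∀ S T : Finset E, S ⊆ T → f S ≤ f T)
    (hsub : ∀ (S T : Finset E) (e : E), S ⊆ T → e ∉ T →
      f (insert e T) - f T ≤ f (insert e S) - f S)
    (hempty : f ∅ = 0) (hpos : ∀ e : E, 0 < f {e})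
    (κ : ℝ)
    (hκ : κ = 1 - Finset.univ.inf' Finset.univ_nonempty
      (fun e => (f Finset.univ - f (Finset.univ.erase e)) / f {e}))
    (S : Finset E) :
    (1 - κ) * ∑ e ∈ S, f {e} ≤ f S := by
  set c := Finset.univ.inf' Finset.univ_nonempty
      (fun e => (f Finset.univ - f (Finset.univ.erase e)) / f {e}) with hc
  have hκ' : 1 - κ = c := by rw [hκ]; ring
  rw [hκ']
  -- key: f S ≥ ∑_{e∈S} (f univ - f (univ.erase e))
  have key : ∀ S : Finset E, ∑ e ∈ S, (f Finset.univ - f (Finset.univ.erase e)) ≤ f S := by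
    intro S
    induction S using Finset.induction_on with
    | empty => simp [hempty]
    | insert a S' ha ih =>
      rw [Finset.sum_insert ha]
      have h1 : f Finset.univ - f (Finset.univ.erase a) ≤ f (insert a S') - f S' := by
        have := hsub S' (Finset.univ.erase a) a
          (fun x hx => Finset.mem_erase.mpr ⟨fun h => ha (h ▸ hx), Finset.mem_univ x⟩)
          (Finset.notMem_erase a _)
        rwa [Finset.insert_erase (Finset.mem_univ a)] at this
      linarith
  calc c * ∑ e ∈ S, f {e} = ∑ e ∈ S, c * f {e} := by rw [Finset.mul_sum]
    _ ≤ ∑ e ∈ S, (f Finset.univ - f (Finset.univ.erase e)) := by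
        apply Finset.sum_le_sum
        intro e _
        have hce : c ≤ (f Finset.univ - f (Finset.univ.erase e)) / f {e} :=
          Finset.inf'_le _ (Finset.mem_univ e)
        have := hpos e
        calc c * f {e} ≤ ((f Finset.univ - f (Finset.univ.erase e)) / f {e}) * f {e} := by
              apply mul_le_mul_of_nonneg_right hce this.le
          _ = f Finset.univ - f (Finset.univ.erase e) := by field_simp
    _ ≤ f S := key S
end

section
/- Suppose x_e : [0,T] → [0,1] satisfies the differential growth dx_e/dτ = (b·x_e + 1/d)/c for constants b, c, d > 0 while a dual variable α grows at rate dα/dτ = 1/(λ L) with L = ln(1+2d^2), starting from x_e(0) ≥ (1/(b d))(exp(λ L b α(0)/c) - 1). Then for all τ, x_e(τ) ≥ (1/(b d))(exp(λ L b α(τ)/c) - 1). -/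
/-- Differential-inequality version of Lemma 2 (bound on the primal variable): if on
`[0,T]` the primal variable grows as `x' = (b·x + 1/d)/c` while the dual variable grows as
`α' = 1/(λL)` with `L = ln(1+2d²)`, and initially `x 0 ≥ φ(α 0)` for
`φ(a) = (1/(bd))(exp(λLba/c) - 1)`, then `x τ ≥ φ(α τ)` for all `τ ∈ [0,T]`. -/
theorem stmt16 (T b c d lam : ℝ) (hT : 0 ≤ T) (hb : 0 < b) (hc : 0 < c) (hd : 0 < d)
    (hlam : 0 < lam)
    (L : ℝ) (hL : L = Real.log (1 + 2 * d ^ 2))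
    (x α : ℝ → ℝ)
    (hx : ∀ τ ∈ Set.Icc 0 T, HasDerivAt x ((b * x τ + 1 / d) / c) τ)
    (hα : ∀ τ ∈ Set.Icc 0 T, HasDerivAt α (1 / (lam * L)) τ)
    (h0 : 1 / (b * d) * (Real.exp (lam * L * b * α 0 / c) - 1) ≤ x 0) :
    ∀ τ ∈ Set.Icc 0 T,
      1 / (b * d) * (Real.exp (lam * L * b * α τ / c) - 1) ≤ x τ := by
  have hL0 : 0 < L := by
    rw [hL]; apply Real.log_pos; nlinarith
  set φ : ℝ → ℝ := fun τ => 1 / (b * d) * (Real.exp (lam * L * b * α τ / c) - 1) with hφ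
  have hφd : ∀ τ ∈ Set.Icc 0 T, HasDerivAt φ ((b * φ τ + 1 / d) / c) τ := by
    intro τ hτ
    have h1 : HasDerivAt (fun t => lam * L * b * α t / c)
        (lam * L * b * (1 / (lam * L)) / c) τ := ((hα τ hτ).const_mul (lam * L * b)).div_const c
    have h2 := ((h1.exp.sub_const 1).const_mul (1 / (b * d)))
    convert h2 using 1
    · rfl
    · rfl
    simp only [hφ]
    field_simp
    ring
  set f : ℝ → ℝ := fun τ => (x τ - φ τ) * Real.exp (-(b / c) * τ) with hf
  have hfd : ∀ τ ∈ Set.Icc 0 T, HasDerivAt f 0 τ := by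
    intro τ hτ
    have hE : HasDerivAt (fun t => Real.exp (-(b / c) * t))
        (Real.exp (-(b / c) * τ) * (-(b / c))) τ := by
      have := ((hasDerivAt_id τ).const_mul (-(b / c))).exp
      simpa using this
    have h3 := ((hx τ hτ).sub (hφd τ hτ)).mul hE
    convert h3 using 1
    · rfl
    · rfl
    · rfl
    have hE0 : Real.exp (-(b / c) * τ) ≠ 0 := Real.exp_ne_zero _
    field_simp
    rw [Pi.sub_apply]
    ring
  have hcont : ContinuousOn f (Set.Icc 0 T) :=
    fun τ hτ => ((hfd τ hτ).continuousAt).continuousWithinAt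
  have hconst : ∀ τ ∈ Set.Icc 0 T, f τ = f 0 := by
    intro τ hτ
    exact constant_of_has_deriv_right_zero hcont
      (fun y hy => ((hfd y ⟨hy.1, hy.2.le⟩).hasDerivWithinAt)) τ hτ
  intro τ hτ
  have h0T : (0 : ℝ) ∈ Set.Icc 0 T := ⟨le_refl 0, hT⟩
  have hf0 : 0 ≤ f 0 := by
    simp only [hf]
    have : 0 ≤ x 0 - φ 0 := by simpa [hφ] using h0
    positivity
  have heq := hconst τ hτ
  have hfτ : 0 ≤ f τ := heq ▸ hf0
  have hE : 0 < Real.exp (-(b / c) * τ) := Real.exp_pos _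
  have hrfl : f τ = (x τ - φ τ) * Real.exp (-(b / c) * τ) := rfl
  show φ τ ≤ x τ
  nlinarith [hfτ, hE, hrfl]
end
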